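/- Let p,q ≥ 1 and let π ∈ S_ann-nc(p,q), with π₀ := π|_{Π(τ_{p,q})}. Then the set of elements lying in bridges of Kr_{p,q}(π) = π⁻¹τ_{p,q} (respectively of Kr_{p,q}⁻¹(π) = τ_{p,q}π⁻¹) is the union of exactly two orbits of Kr_{p,q}(π₀) (respectively of Kr_{p,q}⁻¹(π₀)), one contained in [p] and one contained in [p+1,p+q] (these are called the outside faces). Moreover, in the Kr⁻¹ version, every a ∈ [p] with π⁻¹(a) ∈ [p+1,p+q] and every a ∈ [p+1,p+q] with π⁻¹(a) ∈ [p] lies in this set. -/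

import Mathlib

namespace AnnNC

/-- The orbit ("same cycle") setoid of a permutation. -/
def orbitSetoid {α : Type*} (σ : Equiv.Perm α) : Setoid α :=
  ⟨σ.SameCycle, ⟨fun x => Equiv.Perm.SameCycle.refl σ x,
    fun h => h.symm, fun h h' => h.trans h'⟩⟩

/-- Number of orbits (cycles, counting fixed points) of a permutation. -/
noncomputable def numOrbits {α : Type*} (σ : Equiv.Perm α) : ℕ :=
  Nat.card (Quotient (orbitSetoid σ))

/-- Number of blocks of the join `Π(σ) ∨ Π(ρ)` of the orbit partitions. -/
noncomputable def numJoin {α : Type*} (σ ρ : Equiv.Perm α) : ℕ :=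
  Nat.card (Quotient (orbitSetoid σ ⊔ orbitSetoid ρ))

/-- Euler characteristic `χ_ρ(π) = #(ρ) + #(π) + #(π⁻¹ρ) − n`. -/
noncomputable def euler {α : Type*} (ρ π : Equiv.Perm α) : ℤ :=
  (numOrbits ρ : ℤ) + (numOrbits π : ℤ) + (numOrbits (π⁻¹ * ρ) : ℤ) - (Nat.card α : ℤ)

/-- `π` is noncrossing on `ρ`. -/
def IsNoncrossingOn {α : Type*} (π ρ : Equiv.Perm α) : Prop :=
  euler ρ π = 2 * (numJoin π ρ : ℤ)

/-- Euler characteristic of permutations regarded as permutations of a subset `S`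
(for permutations fixing the complement of `S` pointwise). -/
noncomputable def eulerOn {α : Type*} (S : Set α) (ρ π : Equiv.Perm α) : ℤ :=
  ((numOrbits ρ : ℤ) - (Nat.card (Sᶜ : Set α) : ℤ)) +
    ((numOrbits π : ℤ) - (Nat.card (Sᶜ : Set α) : ℤ)) +
    ((numOrbits (π⁻¹ * ρ) : ℤ) - (Nat.card (Sᶜ : Set α) : ℤ)) - (Nat.card (S : Set α) : ℤ)

/-- `π` is noncrossing on `ρ`, both regarded as permutations of the subset `S`. -/
def IsNoncrossingWithin {α : Type*} (S : Set α) (π ρ : Equiv.Perm α) : Prop :=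
  eulerOn S ρ π = 2 * ((numJoin π ρ : ℤ) - (Nat.card (Sᶜ : Set α) : ℤ))

/-- `τ_{p,q} = (1,…,p)(p+1,…,p+q)` as a permutation of `Fin (p+q)`. -/
def tauPQ (p q : ℕ) : Equiv.Perm (Fin (p + q)) :=
  Equiv.permCongr finSumFinEquiv (Equiv.sumCongr (finRotate p) (finRotate q))

/-- Disc-noncrossing permutations: noncrossing on `τ_{p,q}` and the orbit partition
refines that of `τ_{p,q}`. -/
def SDiscNC (p q : ℕ) : Set (Equiv.Perm (Fin (p + q))) :=
  {π | IsNoncrossingOn π (tauPQ p q) ∧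
    ∀ x y : Fin (p + q), π.SameCycle x y → ((x : ℕ) < p ↔ (y : ℕ) < p)}

/-- Annular-noncrossing permutations: noncrossing on `τ_{p,q}` with at least one bridge. -/
def SAnnNC (p q : ℕ) : Set (Equiv.Perm (Fin (p + q))) :=
  {π | IsNoncrossingOn π (tauPQ p q) ∧
    ∃ a b : Fin (p + q), π.SameCycle a b ∧ (a : ℕ) < p ∧ p ≤ (b : ℕ)}

/-- The set of elements lying in bridges of `σ`. -/
def BridgeSet (p q : ℕ) (σ : Equiv.Perm (Fin (p + q))) : Set (Fin (p + q)) :=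
  {x | ∃ a b : Fin (p + q), σ.SameCycle x a ∧ σ.SameCycle x b ∧ (a : ℕ) < p ∧ p ≤ (b : ℕ)}

/-- `π₀` is the permutation induced by `π` on the partition `Π(τ_{p,q})`
(the first–return map of `π` to each of the two sides). -/
def IsPiZero (p q : ℕ) (π π₀ : Equiv.Perm (Fin (p + q))) : Prop :=
  ∀ a : Fin (p + q), ∃ k : ℕ, 0 < k ∧ π₀ a = (π ^ k) a ∧
    (((a : ℕ) < p) ↔ (((π ^ k) a : ℕ) < p)) ∧
    ∀ j : ℕ, 0 < j → j < k → ¬ (((a : ℕ) < p) ↔ (((π ^ j) a : ℕ) < p))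

/-- The order `π ⪯ ρ` for (unhatted) permutations: the orbit partition of `π` refines
that of `ρ` and `π` is noncrossing on `ρ`. -/
def permLe {α : Type*} (π ρ : Equiv.Perm α) : Prop :=
  (∀ x y : α, π.SameCycle x y → ρ.SameCycle x y) ∧ IsNoncrossingOn π ρ

/-- The order relation `π ⪯ ρ̂` in `S_nc-sd(p,q)`, i.e. `Kr(ρ) ⪯ Kr(π)`. -/
def leAnnHat (p q : ℕ) (π ρ : Equiv.Perm (Fin (p + q))) : Prop :=
  permLe (ρ⁻¹ * tauPQ p q) (π⁻¹ * tauPQ p q)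

/-- `σ` is the permutation induced by `π` on the subset `J` (first-return map),
extended by the identity off `J`. -/
def IsInducedOn {α : Type*} (π σ : Equiv.Perm α) (J : Set α) : Prop :=
  (∀ a ∉ J, σ a = a) ∧
  ∀ a ∈ J, ∃ k : ℕ, 0 < k ∧ σ a = (π ^ k) a ∧ (π ^ k) a ∈ J ∧
    ∀ j : ℕ, 0 < j → j < k → (π ^ j) a ∉ J

/-- The size of an orbit of a permutation. -/
noncomputable def orbitSize {α : Type*} (σ : Equiv.Perm α) (c : Quotient (orbitSetoid σ)) : ℕ :=
  Nat.card {x : α // Quotient.mk (orbitSetoid σ) x = c}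

/-- `∏_{U ∈ Π(σ)} (−1)^{|U|−1} C_{|U|−1}`. -/
noncomputable def catProd {α : Type*} (σ : Equiv.Perm α) : ℤ :=
  ∏ᶠ c : Quotient (orbitSetoid σ),
    ((-1 : ℤ) ^ (orbitSize σ c - 1) * (catalan (orbitSize σ c - 1) : ℤ))

/-- The carrier of the poset `S_nc-sd(p,q)`: pairs (permutation, hatted?). -/
def NCSDSet (p q : ℕ) : Set (Equiv.Perm (Fin (p + q)) × Bool) :=
  {z | (z.2 = false ∧ (z.1 ∈ SDiscNC p q ∪ SAnnNC p q)) ∨ (z.2 = true ∧ z.1 ∈ SDiscNC p q)}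

/-- The partial order of `S_nc-sd(p,q)`. -/
def ncsdLe (p q : ℕ) (a b : Equiv.Perm (Fin (p + q)) × Bool) : Prop :=
  (a.2 = false ∧ b.2 = false ∧ permLe a.1 b.1) ∨
  (b.2 = true ∧ permLe (b.1⁻¹ * tauPQ p q) (a.1⁻¹ * tauPQ p q))

end AnnNC

theorem Equiv.Perm.apply_inv_self {α : Type*} (f : Equiv.Perm α) (x : α) : f (f⁻¹ x) = x := by
  simp only [Equiv.Perm.coe_inv, Equiv.apply_symm_apply]

theorem Equiv.Perm.inv_apply_self {α : Type*} (f : Equiv.Perm α) (x : α) : f⁻¹ (f x) = x := by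
  simp only [Equiv.Perm.coe_inv, Equiv.symm_apply_apply]

namespace AnnNC

open Equiv Equiv.Perm

variable {α : Type*}

lemma orbit_rel {σ : Equiv.Perm α} {x y : α} : orbitSetoid σ x y ↔ σ.SameCycle x y := Iff.rfl

/-- Permutations that move every point within its `r`-class form a subgroup. -/
def keepSubgroup (r : Setoid α) : Subgroup (Equiv.Perm α) where
  carrier := {g | ∀ z, r z (g z)}
  one_mem' := fun z => r.refl' z
  mul_mem' := by
    intro a b ha hb z
    exact r.trans' (hb z) (ha (b z))
  inv_mem' := by
    intro g hg z
    have := hg (g⁻¹ z)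
    rw [Equiv.Perm.apply_inv_self] at this
    exact r.symm' this

lemma keeps_zpow {r : Setoid α} {g : Equiv.Perm α} (hg : ∀ z, r z (g z)) (i : ℤ) (z : α) :
    r z ((g ^ i) z) := by
  have : g ∈ keepSubgroup r := hg
  exact Subgroup.zpow_mem _ this i z

lemma keeps_sameCycle {r : Setoid α} {g : Equiv.Perm α} (hg : ∀ z, r z (g z)) {x y : α}
    (h : g.SameCycle x y) : r x y := by
  obtain ⟨i, rfl⟩ := h
  exact keeps_zpow hg i x

lemma keeps_orbit (g : Equiv.Perm α) (z : α) : orbitSetoid g z (g z) := ⟨1, by simp⟩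

lemma keeps_join_left {s : Setoid α} (g : Equiv.Perm α) (hle : orbitSetoid g ≤ s) (z : α) :
    s z (g z) := hle (keeps_orbit g z)

/-- Orbits of a product refine the join of the orbits. -/
lemma sameCycle_mul_le {f g : Equiv.Perm α} {x y : α} (h : (f * g).SameCycle x y) :
    (orbitSetoid f ⊔ orbitSetoid g) x y := by
  refine keeps_sameCycle ?_ h
  intro z
  have h1 : (orbitSetoid f ⊔ orbitSetoid g) z (g z) := keeps_join_left g le_sup_right z
  have h2 : (orbitSetoid f ⊔ orbitSetoid g) (g z) (f (g z)) := keeps_join_left f le_sup_left (g z)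
  exact Setoid.trans' _ h1 h2

/-- The setoid identifying `a` and `b` only. -/
def pairS (a b : α) : Setoid α :=
  ⟨fun x y => x = y ∨ (x = a ∧ y = b) ∨ (x = b ∧ y = a), by
    refine ⟨fun x => Or.inl rfl, ?_, ?_⟩
    · intro x y h; aesop
    · intro x y z h1 h2; aesop⟩

lemma pairS_ab (a b : α) : pairS a b a b := Or.inr (Or.inl ⟨rfl, rfl⟩)

lemma sup_pair_rel {s : Setoid α} {a b x y : α} :
    (s ⊔ pairS a b) x y ↔ s x y ∨ (s x a ∧ s b y) ∨ (s x b ∧ s a y) := by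
  constructor
  · intro h
    let P : α → α → Prop := fun x y => s x y ∨ (s x a ∧ s b y) ∨ (s x b ∧ s a y)
    have htrans : ∀ {x y z : α}, P x y → P y z → P x z := by
      rintro x y z (h1 | ⟨h1, h2⟩ | ⟨h1, h2⟩) (h1' | ⟨h1', h2'⟩ | ⟨h1', h2'⟩)
      · exact Or.inl (s.trans' h1 h1')
      · exact Or.inr (Or.inl ⟨s.trans' h1 h1', h2'⟩)
      · exact Or.inr (Or.inr ⟨s.trans' h1 h1', h2'⟩)
      · exact Or.inr (Or.inl ⟨h1, s.trans' h2 h1'⟩)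
      · exact Or.inl (s.trans' (s.trans' h1 (s.symm' (s.trans' h2 h1'))) h2')
      · exact Or.inl (s.trans' h1 h2')
      · exact Or.inr (Or.inr ⟨h1, s.trans' h2 h1'⟩)
      · exact Or.inl (s.trans' h1 h2')
      · exact Or.inl (s.trans' (s.trans' h1 (s.symm' (s.trans' h2 h1'))) h2')
    have hsymm : ∀ {x y : α}, P x y → P y x := by
      rintro x y (h1 | ⟨h1, h2⟩ | ⟨h1, h2⟩)
      · exact Or.inl (s.symm' h1)
      · exact Or.inr (Or.inr ⟨s.symm' h2, s.symm' h1⟩)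
      · exact Or.inr (Or.inl ⟨s.symm' h2, s.symm' h1⟩)
    let t : Setoid α := ⟨P, ⟨fun x => Or.inl (s.refl' x), hsymm, htrans⟩⟩
    have hle : s ⊔ pairS a b ≤ t := by
      refine sup_le (fun u v h => Or.inl h) ?_
      rintro u v (h | ⟨h1, h2⟩ | ⟨h1, h2⟩)
      · exact Or.inl (h ▸ s.refl' u)
      · exact Or.inr (Or.inl ⟨h1 ▸ s.refl' u, h2 ▸ s.refl' v⟩)
      · exact Or.inr (Or.inr ⟨h1 ▸ s.refl' u, h2 ▸ s.refl' v⟩)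
    exact hle h
  · have hs : s ≤ s ⊔ pairS a b := le_sup_left
    have hp : pairS a b ≤ s ⊔ pairS a b := le_sup_right
    have hab : (s ⊔ pairS a b) a b := hp (pairS_ab a b)
    rintro (h | ⟨h1, h2⟩ | ⟨h1, h2⟩)
    · exact hs h
    · exact Setoid.trans' _ (Setoid.trans' _ (hs h1) hab) (hs h2)
    · exact Setoid.trans' _ (Setoid.trans' _ (hs h1) (Setoid.symm' _ hab)) (hs h2)

end AnnNC
namespace AnnNC

open Equiv Equiv.Perm

variable {α : Type*}

section Counting

variable [Finite α]

/-- The canonical map between quotients by comparable setoids. -/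
def quotMap {r s : Setoid α} (h : r ≤ s) : Quotient r → Quotient s :=
  Quotient.map' id fun _ _ hab => h hab

lemma quotMap_mk {r s : Setoid α} (h : r ≤ s) (x : α) :
    quotMap h (Quotient.mk r x) = Quotient.mk s x := rfl

lemma quotMap_surjective {r s : Setoid α} (h : r ≤ s) : Function.Surjective (quotMap h) := by
  intro c
  obtain ⟨x, rfl⟩ := Quotient.exists_rep c
  exact ⟨Quotient.mk r x, rfl⟩

lemma card_quot_le_of_le {r s : Setoid α} (h : r ≤ s) :
    Nat.card (Quotient s) ≤ Nat.card (Quotient r) :=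
  Nat.card_le_card_of_surjective _ (quotMap_surjective h)

lemma card_quot_le_sup_pair (s : Setoid α) (a b : α) :
    Nat.card (Quotient s) ≤ Nat.card (Quotient (s ⊔ pairS a b)) + 1 := by
  classical
  have h : s ≤ s ⊔ pairS a b := le_sup_left
  set F : Quotient s → Quotient (s ⊔ pairS a b) ⊕ Unit := fun x =>
    if x = Quotient.mk s b then Sum.inr () else Sum.inl (quotMap h x) with hF
  have hinj : Function.Injective F := by
    intro x y hxy
    obtain ⟨u, rfl⟩ := Quotient.exists_rep x
    obtain ⟨v, rfl⟩ := Quotient.exists_rep y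
    by_cases hu : Quotient.mk s u = Quotient.mk s b
    · by_cases hv : Quotient.mk s v = Quotient.mk s b
      · rw [hu, hv]
      · simp only [hF, if_pos hu, if_neg hv] at hxy
        exact absurd hxy (by simp)
    · by_cases hv : Quotient.mk s v = Quotient.mk s b
      · simp only [hF, if_pos hv, if_neg hu] at hxy
        exact absurd hxy (by simp)
      · simp only [hF, if_neg hu, if_neg hv, Sum.inl.injEq] at hxy
        rw [quotMap_mk, quotMap_mk] at hxy
        have := Quotient.exact hxy
        rcases sup_pair_rel.1 this with h1 | ⟨h1, h2⟩ | ⟨h1, h2⟩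
        · exact Quotient.sound h1
        · exact absurd (Quotient.sound (s.symm' h2)) hv
        · exact absurd (Quotient.sound h1) hu
  calc Nat.card (Quotient s) ≤ Nat.card (Quotient (s ⊔ pairS a b) ⊕ Unit) :=
        Nat.card_le_card_of_injective F hinj
    _ = Nat.card (Quotient (s ⊔ pairS a b)) + 1 := by simp [Nat.card_sum]

lemma card_quot_sup_pair_add_one {s : Setoid α} {a b : α} (hab : ¬ s a b) :
    Nat.card (Quotient (s ⊔ pairS a b)) + 1 = Nat.card (Quotient s) := by
  classical
  have h : s ≤ s ⊔ pairS a b := le_sup_left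
  -- the restriction of `quotMap` to classes different from that of `b` is a bijection
  set G : {x : Quotient s // x ≠ Quotient.mk s b} → Quotient (s ⊔ pairS a b) := fun x =>
    quotMap h x.1 with hG
  have hinj : Function.Injective G := by
    rintro ⟨x, hx⟩ ⟨y, hy⟩ hxy
    obtain ⟨u, rfl⟩ := Quotient.exists_rep x
    obtain ⟨v, rfl⟩ := Quotient.exists_rep y
    simp only [hG, quotMap_mk] at hxy
    have := Quotient.exact hxy
    rcases sup_pair_rel.1 this with h1 | ⟨h1, h2⟩ | ⟨h1, h2⟩
    · exact Subtype.ext (Quotient.sound h1)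
    · exact absurd (Quotient.sound (s.symm' h2)) hy
    · exact absurd (Quotient.sound h1) hx
  have hsurj : Function.Surjective G := by
    intro c
    obtain ⟨z, rfl⟩ := Quotient.exists_rep c
    by_cases hz : Quotient.mk s z = Quotient.mk s b
    · refine ⟨⟨Quotient.mk s a, ?_⟩, ?_⟩
      · intro hcon
        exact hab (Quotient.exact hcon)
      · simp only [hG, quotMap_mk]
        apply Quotient.sound
        have hzb : s z b := Quotient.exact hz
        have h1 : (s ⊔ pairS a b) a b := le_sup_right (α := Setoid α) (pairS_ab a b)
        have h2 : (s ⊔ pairS a b) b z := h (s.symm' hzb)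
        exact Setoid.trans' _ h1 h2
    · exact ⟨⟨Quotient.mk s z, hz⟩, rfl⟩
  have hbij : Function.Bijective G := ⟨hinj, hsurj⟩
  have hcard : Nat.card {x : Quotient s // x ≠ Quotient.mk s b} =
      Nat.card (Quotient (s ⊔ pairS a b)) := Nat.card_eq_of_bijective G hbij
  haveI : Unique {x : Quotient s // x = Quotient.mk s b} :=
    ⟨⟨⟨Quotient.mk s b, rfl⟩⟩, by rintro ⟨x, rfl⟩; rfl⟩
  have hsplit : Nat.card (Quotient s) =
      Nat.card {x : Quotient s // x = Quotient.mk s b} +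
      Nat.card {x : Quotient s // x ≠ Quotient.mk s b} := by
    rw [← Nat.card_sum]
    exact (Nat.card_congr (Equiv.sumCompl (· = Quotient.mk s b))).symm
  have h1 : Nat.card {x : Quotient s // x = Quotient.mk s b} = 1 := Nat.card_unique
  omega

end Counting

end AnnNC
set_option linter.unusedSectionVars false
namespace AnnNC

open Equiv Equiv.Perm Function

variable {α : Type*}

section Swap

variable [Finite α] [DecidableEq α]

lemma pairS_le_orbit {g : Equiv.Perm α} {a b : α} (h : g.SameCycle a b) :
    pairS a b ≤ orbitSetoid g := by
  rintro x y (rfl | ⟨rfl, rfl⟩ | ⟨rfl, rfl⟩)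
  · exact Equiv.Perm.SameCycle.refl _ _
  · exact h
  · exact h.symm

lemma orbit_swap_le_pair (a b : α) : orbitSetoid (Equiv.swap a b) ≤ pairS a b := by
  intro x y h
  refine keeps_sameCycle ?_ h
  intro z
  by_cases hza : z = a
  · exact Or.inr (Or.inl ⟨hza, by rw [hza, Equiv.swap_apply_left]⟩)
  by_cases hzb : z = b
  · exact Or.inr (Or.inr ⟨hzb, by rw [hzb, Equiv.swap_apply_right]⟩)
  · exact Or.inl (Equiv.swap_apply_of_ne_of_ne hza hzb).symm

lemma minimalPeriod_perm_pos (g : Equiv.Perm α) (x : α) : 0 < Function.minimalPeriod (⇑g) x := by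
  apply Function.minimalPeriod_pos_of_mem_periodicPts
  rw [Function.mem_periodicPts]
  refine ⟨orderOf g, orderOf_pos g, ?_⟩
  show (⇑g)^[orderOf g] x = x
  rw [Equiv.Perm.iterate_eq_pow, pow_orderOf_eq_one]
  rfl

/-- If `a` and `b` are in different cycles of `g`, then they are in the same cycle of
`swap a b * g`. -/
lemma sameCycle_swap_mul {g : Equiv.Perm α} {a b : α} (h : ¬ g.SameCycle a b) :
    (Equiv.swap a b * g).SameCycle a b := by
  set m := Function.minimalPeriod (⇑g) a with hm
  have hmpos : 0 < m := minimalPeriod_perm_pos g a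
  have hgm : (g ^ m) a = a := by
    rw [← Equiv.Perm.iterate_eq_pow]; exact Function.iterate_minimalPeriod
  have key : ∀ j, j ≤ m - 1 → ((Equiv.swap a b * g) ^ j) a = (g ^ j) a := by
    intro j hj
    induction j with
    | zero => simp
    | succ i ih =>
      have hi : i ≤ m - 1 := le_trans (Nat.le_succ i) hj
      have hne_a : (g ^ (i + 1)) a ≠ a := by
        intro hcon
        have hper : Function.IsPeriodicPt (⇑g) (i + 1) a := by
          show (⇑g)^[i+1] a = a
          rw [Equiv.Perm.iterate_eq_pow]; exact hcon
        exact Function.not_isPeriodicPt_of_pos_of_lt_minimalPeriod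
          (Nat.succ_ne_zero i) (by omega : i + 1 < Function.minimalPeriod (⇑g) a) hper
      have hne_b : (g ^ (i + 1)) a ≠ b := by
        intro hcon
        exact h ⟨(i + 1 : ℕ), by rw [zpow_natCast]; exact hcon⟩
      calc ((Equiv.swap a b * g) ^ (i + 1)) a
          = (Equiv.swap a b * g) (((Equiv.swap a b * g) ^ i) a) := by
            rw [pow_succ', Equiv.Perm.mul_apply]
        _ = (Equiv.swap a b) (g ((g ^ i) a)) := by rw [ih hi, Equiv.Perm.mul_apply]
        _ = (Equiv.swap a b) ((g ^ (i + 1)) a) := by rw [pow_succ', Equiv.Perm.mul_apply]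
        _ = (g ^ (i + 1)) a := Equiv.swap_apply_of_ne_of_ne hne_a hne_b
  obtain ⟨l, hl⟩ : ∃ l, m = l + 1 := ⟨m - 1, by omega⟩
  have hfin : ((Equiv.swap a b * g) ^ m) a = b := by
    calc ((Equiv.swap a b * g) ^ m) a
        = (Equiv.swap a b * g) (((Equiv.swap a b * g) ^ l) a) := by
          rw [hl, pow_succ', Equiv.Perm.mul_apply]
      _ = (Equiv.swap a b) (g ((g ^ l) a)) := by
          rw [key l (by omega), Equiv.Perm.mul_apply]
      _ = (Equiv.swap a b) ((g ^ m) a) := by rw [hl, pow_succ', Equiv.Perm.mul_apply]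
      _ = b := by rw [hgm, Equiv.swap_apply_left]
  exact ⟨(m : ℤ), by rw [zpow_natCast]; exact hfin⟩

omit [DecidableEq α] in
/-- A finite invariant set propagates to the `SameCycle` relation. -/
lemma sameCycle_mem_of_mapsTo {g : Equiv.Perm α} {P : Set α} (hP : Set.MapsTo (⇑g) P P)
    {x y : α} (h : g.SameCycle x y) (hx : x ∈ P) : y ∈ P := by
  have hPfin : P.Finite := Set.toFinite P
  have himg : (⇑g) '' P = P := by
    apply Set.eq_of_subset_of_ncard_le (Set.image_subset_iff.2 hP) _ hPfin
    rw [Set.ncard_image_of_injective P g.injective]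
  have hkeeps : ∀ z, (Setoid.ker (fun w => w ∈ P)) z (g z) := by
    intro z
    show (z ∈ P) = (g z ∈ P)
    by_cases hz : z ∈ P
    · exact propext (iff_of_true hz (hP hz))
    · have hgz : g z ∉ P := by
        intro hcon
        rw [← himg] at hcon
        obtain ⟨w, hw, hweq⟩ := hcon
        exact hz (g.injective hweq ▸ hw)
      exact propext (iff_of_false hz hgz)
  have := keeps_sameCycle hkeeps h
  have : (x ∈ P) = (y ∈ P) := this
  rwa [← this]

/-- If `a ≠ b` are in the same cycle of `g`, they are in different cycles of `swap a b * g`. -/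
lemma not_sameCycle_swap_mul {g : Equiv.Perm α} {a b : α} (hab : a ≠ b)
    (h : g.SameCycle a b) : ¬ (Equiv.swap a b * g).SameCycle a b := by
  -- choose the least positive k with (g ^ k) b = a
  have hba : g.SameCycle b a := h.symm
  obtain ⟨i, hilt, hieq⟩ := hba.exists_pow_eq'
  have hipos : 0 < i := by
    rcases Nat.eq_zero_or_pos i with rfl | h'
    · simp at hieq; exact absurd hieq.symm hab
    · exact h'
  have hex : ∃ k, 0 < k ∧ (g ^ k) b = a := ⟨i, hipos, hieq⟩
  classical
  set k := Nat.find hex with hk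
  obtain ⟨hkpos, hkeq⟩ := Nat.find_spec hex
  have hkmin : ∀ j, 0 < j → j < k → (g ^ j) b ≠ a := by
    intro j hj hjk hcon
    exact Nat.find_min hex hjk ⟨hj, hcon⟩
  set P : Set α := (fun i => (g ^ i) b) '' Set.Iio k with hPdef
  have hbP : b ∈ P := ⟨0, hkpos, by simp⟩
  have haP : a ∉ P := by
    rintro ⟨j, hj, hjeq⟩
    simp only [Set.mem_Iio] at hj
    rcases Nat.eq_zero_or_pos j with rfl | hjpos
    · simp at hjeq; exact hab hjeq.symm
    · exact hkmin j hjpos hj hjeq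
  have hmaps : Set.MapsTo (⇑(Equiv.swap a b * g)) P P := by
    rintro x ⟨j, hj, rfl⟩
    simp only [Set.mem_Iio] at hj
    rcases Nat.lt_or_ge (j + 1) k with hjk | hjk
    · have hne_a : (g ^ (j + 1)) b ≠ a := hkmin (j + 1) (Nat.succ_pos j) hjk
      have hne_b : (g ^ (j + 1)) b ≠ b := by
        intro hcon
        -- then a = g^(k - (j+1)) b with 0 < k - (j+1) < k, contradicting minimality
        have h2 : (g ^ (k - (j + 1))) ((g ^ (j + 1)) b) = a := by
          rw [← Equiv.Perm.mul_apply, ← pow_add]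
          have : k - (j + 1) + (j + 1) = k := by omega
          rw [this, hkeq]
        rw [hcon] at h2
        exact hkmin (k - (j + 1)) (by omega) (by omega) h2
      have hstep : (Equiv.swap a b * g) ((g ^ j) b) = (g ^ (j + 1)) b := by
        calc (Equiv.swap a b * g) ((g ^ j) b)
            = (Equiv.swap a b) ((g ^ (j + 1)) b) := by
              rw [Equiv.Perm.mul_apply, pow_succ', Equiv.Perm.mul_apply]
          _ = (g ^ (j + 1)) b := Equiv.swap_apply_of_ne_of_ne hne_a hne_b
      exact ⟨j + 1, Set.mem_Iio.2 hjk, hstep.symm⟩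
    · have hjeq : j + 1 = k := by omega
      have hstep : (Equiv.swap a b * g) ((g ^ j) b) = b := by
        calc (Equiv.swap a b * g) ((g ^ j) b)
            = (Equiv.swap a b) ((g ^ (j + 1)) b) := by
              rw [Equiv.Perm.mul_apply, pow_succ', Equiv.Perm.mul_apply]
          _ = b := by rw [hjeq, hkeq, Equiv.swap_apply_left]
      rw [hstep]; exact hbP
  intro hcon
  exact haP (sameCycle_mem_of_mapsTo hmaps hcon.symm hbP)

/-- Merging two cycles: the orbit setoid of `swap a b * g`. -/
lemma orbitSetoid_swap_mul {g : Equiv.Perm α} {a b : α} (h : ¬ g.SameCycle a b) :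
    orbitSetoid (Equiv.swap a b * g) = orbitSetoid g ⊔ pairS a b := by
  apply le_antisymm
  · intro x y hxy
    have h1 : (orbitSetoid (Equiv.swap a b) ⊔ orbitSetoid g) x y := sameCycle_mul_le hxy
    have h2 : orbitSetoid (Equiv.swap a b) ⊔ orbitSetoid g ≤ orbitSetoid g ⊔ pairS a b := by
      apply sup_le
      · exact le_trans (orbit_swap_le_pair a b) le_sup_right
      · exact le_sup_left
    exact h2 h1
  · apply sup_le
    · -- orbits of g refine orbits of swap*g : g = swap * (swap * g)
      intro x y hxy
      have hg : g = Equiv.swap a b * (Equiv.swap a b * g) := by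
        rw [← mul_assoc, Equiv.swap_mul_self, one_mul]
      rw [hg] at hxy
      have h1 := sameCycle_mul_le hxy
      have h2 : orbitSetoid (Equiv.swap a b) ⊔ orbitSetoid (Equiv.swap a b * g) ≤
          orbitSetoid (Equiv.swap a b * g) := by
        apply sup_le
        · exact le_trans (orbit_swap_le_pair a b) (pairS_le_orbit (sameCycle_swap_mul h))
        · exact le_rfl
      exact h2 h1
    · exact pairS_le_orbit (sameCycle_swap_mul h)

lemma numOrbits_swap_mul_merge {g : Equiv.Perm α} {a b : α} (h : ¬ g.SameCycle a b) :
    numOrbits (Equiv.swap a b * g) + 1 = numOrbits g := by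
  unfold numOrbits
  rw [orbitSetoid_swap_mul h]
  exact card_quot_sup_pair_add_one h

lemma numOrbits_swap_mul_split {g : Equiv.Perm α} {a b : α} (hab : a ≠ b)
    (h : g.SameCycle a b) : numOrbits (Equiv.swap a b * g) = numOrbits g + 1 := by
  have h2 : ¬ (Equiv.swap a b * g).SameCycle a b := not_sameCycle_swap_mul hab h
  have := numOrbits_swap_mul_merge h2
  rw [← mul_assoc, Equiv.swap_mul_self, one_mul] at this
  omega

end Swap

end AnnNC
namespace AnnNC

open Equiv Equiv.Perm Function

variable {α : Type*}

section Genus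

variable [Fintype α] [DecidableEq α]

lemma orbitSetoid_inv (g : Equiv.Perm α) : orbitSetoid g⁻¹ = orbitSetoid g :=
  Setoid.ext fun _ _ => Equiv.Perm.sameCycle_inv

lemma orbitSetoid_one : orbitSetoid (1 : Equiv.Perm α) = ⊥ := by
  refine Setoid.ext fun x y => ?_
  rw [show (⊥ : Setoid α) x y ↔ x = y from Iff.rfl]
  exact Equiv.Perm.sameCycle_one

lemma numOrbits_one : numOrbits (1 : Equiv.Perm α) = Nat.card α := by
  unfold numOrbits
  rw [orbitSetoid_one]
  refine Nat.card_congr ⟨Quotient.lift id fun a b h => h, Quotient.mk _, ?_, fun x => rfl⟩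
  intro c
  obtain ⟨x, rfl⟩ := Quotient.exists_rep c
  rfl

theorem genus_le (ρ : Equiv.Perm α) :
    ∀ n (g : Equiv.Perm α), g.support.card ≤ n →
      numOrbits ρ + numOrbits g + numOrbits (g⁻¹ * ρ) ≤ Nat.card α + 2 * numJoin g ρ := by
  intro n
  induction n with
  | zero =>
    intro g hg
    have hsupp : g.support = ∅ := Finset.card_eq_zero.1 (Nat.le_zero.1 hg)
    have hg1 : g = 1 := Equiv.Perm.support_eq_empty_iff.1 hsupp
    subst hg1
    have h1 : numJoin (1 : Equiv.Perm α) ρ = numOrbits ρ := by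
      unfold numJoin numOrbits
      rw [orbitSetoid_one, bot_sup_eq]
    simp only [inv_one, one_mul, numOrbits_one, h1]
    omega
  | succ n ih =>
    intro g hg
    by_cases hg1 : g = 1
    · subst hg1
      have h1 : numJoin (1 : Equiv.Perm α) ρ = numOrbits ρ := by
        unfold numJoin numOrbits
        rw [orbitSetoid_one, bot_sup_eq]
      simp only [inv_one, one_mul, numOrbits_one, h1]
      omega
    · obtain ⟨u, hu⟩ : ∃ u, g u ≠ u := by
        by_contra hcon
        push_neg at hcon
        exact hg1 (Equiv.ext hcon)
      set t := Equiv.swap u (g u) with ht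
      set g' := t * g with hg'
      have hgg' : g = t * g' := by rw [hg', ← mul_assoc, ht, Equiv.swap_mul_self, one_mul]
      have hcard : g'.support.card < g.support.card :=
        Equiv.Perm.card_support_swap_mul hu
      have hcard' : g'.support.card ≤ n := by omega
      have IH := ih g' hcard'
      -- orbit count of g
      have hscug : g.SameCycle u (g u) := ⟨1, by simp⟩
      have hune : u ≠ g u := Ne.symm hu
      have hsplit : numOrbits g' = numOrbits g + 1 :=
        numOrbits_swap_mul_split hune hscug
      -- σ and σ'
      set σ := g⁻¹ * ρ with hσ
      set σ' := g'⁻¹ * ρ with hσ'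
      set a' := g'⁻¹ u with ha'
      set b' := g'⁻¹ (g u) with hb'
      have hab' : a' ≠ b' := fun hcon => hune (g'⁻¹.injective hcon)
      have hσeq : σ = Equiv.swap a' b' * σ' := by
        have h2 := Equiv.swap_apply_apply g'⁻¹ u (g u)
        rw [inv_inv] at h2
        have h1 : Equiv.swap a' b' = g'⁻¹ * t * g' := by rw [ha', hb', h2, ht]
        have ht2 : t⁻¹ = t := by rw [ht]; exact Equiv.swap_inv u (g u)
        rw [hσ, hσ', hgg', h1, mul_inv_rev, ht2]
        simp [mul_assoc]
      -- joins
      have horb_inv : orbitSetoid g'⁻¹ = orbitSetoid g' := orbitSetoid_inv g'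
      have hg'le : orbitSetoid g' ≤ orbitSetoid g := by
        intro x y hxy
        have h1 := sameCycle_mul_le (f := t) (g := g) hxy
        have h2 : orbitSetoid t ⊔ orbitSetoid g ≤ orbitSetoid g :=
          sup_le (le_trans (orbit_swap_le_pair u (g u)) (pairS_le_orbit hscug)) le_rfl
        exact h2 h1
      have hjoin_le : orbitSetoid g' ⊔ orbitSetoid ρ ≤ orbitSetoid g ⊔ orbitSetoid ρ :=
        sup_le (le_trans hg'le le_sup_left) le_sup_right
      have hgle : orbitSetoid g ≤ orbitSetoid g' ⊔ pairS u (g u) := by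
        intro x y hxy
        rw [hgg'] at hxy
        have h1 := sameCycle_mul_le (f := t) (g := g') hxy
        have h2 : orbitSetoid t ⊔ orbitSetoid g' ≤ orbitSetoid g' ⊔ pairS u (g u) :=
          sup_le (le_trans (orbit_swap_le_pair u (g u)) le_sup_right) le_sup_left
        exact h2 h1
      have hJJ' : numJoin g ρ ≤ numJoin g' ρ := card_quot_le_of_le hjoin_le
      have hjoin_le2 : orbitSetoid g ⊔ orbitSetoid ρ ≤
          (orbitSetoid g' ⊔ orbitSetoid ρ) ⊔ pairS u (g u) := by
        apply sup_le
        · exact le_trans hgle (sup_le (le_trans le_sup_left le_sup_left) le_sup_right)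
        · exact le_trans le_sup_right le_sup_left
      have hJ'J : numJoin g' ρ ≤ numJoin g ρ + 1 := by
        have h1 : Nat.card (Quotient ((orbitSetoid g' ⊔ orbitSetoid ρ) ⊔ pairS u (g u))) ≤
            Nat.card (Quotient (orbitSetoid g ⊔ orbitSetoid ρ)) := card_quot_le_of_le hjoin_le2
        have h2 := card_quot_le_sup_pair (orbitSetoid g' ⊔ orbitSetoid ρ) u (g u)
        unfold numJoin
        omega
      by_cases hA : σ'.SameCycle a' b'
      · -- split on the Kreweras side; joins are equal
        have hσcount : numOrbits σ = numOrbits σ' + 1 := by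
          rw [hσeq]; exact numOrbits_swap_mul_split hab' hA
        -- show joins are equal
        have hpair_le_join' : pairS u (g u) ≤ orbitSetoid g' ⊔ orbitSetoid ρ := by
          have hua' : (orbitSetoid g' ⊔ orbitSetoid ρ) u a' := by
            apply le_sup_left (α := Setoid α)
            exact ⟨-1, by rw [ha']; simp⟩
          have hb'gu : (orbitSetoid g' ⊔ orbitSetoid ρ) b' (g u) := by
            apply le_sup_left (α := Setoid α)
            exact ⟨1, by rw [hb']; simp⟩
          have ha'b' : (orbitSetoid g' ⊔ orbitSetoid ρ) a' b' := by
            have h1 := sameCycle_mul_le (f := g'⁻¹) (g := ρ) hA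
            rw [horb_inv] at h1
            exact h1
          have hugu : (orbitSetoid g' ⊔ orbitSetoid ρ) u (g u) :=
            Setoid.trans' _ (Setoid.trans' _ hua' ha'b') hb'gu
          rintro x y (rfl | ⟨h1, h2⟩ | ⟨h1, h2⟩)
          · exact Setoid.refl' _ x
          · rw [h1, h2]; exact hugu
          · rw [h1, h2]; exact Setoid.symm' _ hugu
        have hjoin_eq : orbitSetoid g ⊔ orbitSetoid ρ = orbitSetoid g' ⊔ orbitSetoid ρ := by
          apply le_antisymm
          · exact le_trans hjoin_le2 (sup_le le_rfl hpair_le_join')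
          · exact hjoin_le
        have hJeq : numJoin g ρ = numJoin g' ρ := by
          unfold numJoin
          rw [hjoin_eq]
        omega
      · -- merge on the Kreweras side
        have hσcount : numOrbits σ + 1 = numOrbits σ' := by
          rw [hσeq]; exact numOrbits_swap_mul_merge hA
        omega

end Genus

end AnnNC
namespace AnnNC

open Equiv Equiv.Perm Function

variable {α : Type*}

section FR

variable [Finite α]

/-- Generic first-return specification with respect to a side predicate `s`. -/
def IsFR (s : α → Prop) (g g₀ : Equiv.Perm α) : Prop :=
  ∀ a, ∃ k, 0 < k ∧ g₀ a = (g ^ k) a ∧ (s a ↔ s ((g ^ k) a)) ∧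
    ∀ j, 0 < j → j < k → ¬ (s a ↔ s ((g ^ j) a))

lemma fr_exists (s : α → Prop) (g : Equiv.Perm α) (a : α) :
    ∃ k, 0 < k ∧ (s a ↔ s ((g ^ k) a)) :=
  ⟨orderOf g, orderOf_pos g, by rw [pow_orderOf_eq_one, Equiv.Perm.one_apply]⟩

open Classical in
/-- The first-return time. -/
noncomputable def frT (s : α → Prop) (g : Equiv.Perm α) (a : α) : ℕ :=
  Nat.find (fr_exists s g a)

open Classical in
lemma frT_spec (s : α → Prop) (g : Equiv.Perm α) (a : α) :
    0 < frT s g a ∧ (s a ↔ s ((g ^ frT s g a) a)) :=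
  Nat.find_spec (fr_exists s g a)

open Classical in
lemma frT_min (s : α → Prop) (g : Equiv.Perm α) (a : α) {j : ℕ} (h0 : 0 < j)
    (hj : j < frT s g a) : ¬ (s a ↔ s ((g ^ j) a)) := fun hc =>
  Nat.find_min (fr_exists s g a) hj ⟨h0, hc⟩

open Classical in
lemma frT_eq_of (s : α → Prop) (g : Equiv.Perm α) (a : α) {k : ℕ} (h0 : 0 < k)
    (hk : s a ↔ s ((g ^ k) a)) (hmin : ∀ j, 0 < j → j < k → ¬ (s a ↔ s ((g ^ j) a))) :
    frT s g a = k := by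
  have h1 : frT s g a ≤ k := Nat.find_le ⟨h0, hk⟩
  rcases lt_or_eq_of_le h1 with h2 | h2
  · exact absurd (frT_spec s g a).2 (hmin _ (frT_spec s g a).1 h2)
  · exact h2

/-- The first-return function. -/
noncomputable def frFun (s : α → Prop) (g : Equiv.Perm α) (a : α) : α :=
  (g ^ frT s g a) a

lemma pow_sub_inv (g : Equiv.Perm α) (a : α) {j k : ℕ} (hj : j ≤ k) :
    (g⁻¹ ^ j) ((g ^ k) a) = (g ^ (k - j)) a := by
  have : (g ^ j) ((g ^ (k - j)) a) = (g ^ k) a := by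
    rw [← Equiv.Perm.mul_apply, ← pow_add]
    have hnum : j + (k - j) = k := by omega
    rw [hnum]
  rw [inv_pow]
  apply (Equiv.symm_apply_eq (g ^ j)).2
  exact this.symm

lemma frFun_inv_frFun (s : α → Prop) (g : Equiv.Perm α) (a : α) :
    frFun s g⁻¹ (frFun s g a) = a := by
  set k := frT s g a with hkdef
  have hk0 : 0 < k := (frT_spec s g a).1
  have hside : s a ↔ s ((g ^ k) a) := (frT_spec s g a).2
  set b := (g ^ k) a with hbdef
  have hpow : ∀ j, j ≤ k → (g⁻¹ ^ j) b = (g ^ (k - j)) a := fun j hj =>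
    pow_sub_inv g a hj
  have hT : frT s g⁻¹ b = k := by
    apply frT_eq_of
    · exact hk0
    · rw [hpow k le_rfl]
      simp only [Nat.sub_self, pow_zero, Equiv.Perm.one_apply]
      exact (Iff.symm hside)
    · intro j hj0 hjk hcon
      rw [hpow j (le_of_lt hjk)] at hcon
      have h1 : s a ↔ s ((g ^ (k - j)) a) := hside.trans hcon
      exact frT_min s g a (by omega) (by omega) h1
  show (g⁻¹ ^ frT s g⁻¹ b) b = a
  rw [hT, hpow k le_rfl]
  simp

lemma frFun_bijective (s : α → Prop) (g : Equiv.Perm α) : Function.Bijective (frFun s g) := by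
  rw [← Finite.injective_iff_bijective]
  intro x y hxy
  have h1 := frFun_inv_frFun s g x
  have h2 := frFun_inv_frFun s g y
  rw [hxy] at h1
  rw [h1] at h2
  exact h2

/-- The first-return permutation. -/
noncomputable def frPerm (s : α → Prop) (g : Equiv.Perm α) : Equiv.Perm α :=
  Equiv.ofBijective (frFun s g) (frFun_bijective s g)

lemma isFR_frPerm (s : α → Prop) (g : Equiv.Perm α) : IsFR s g (frPerm s g) := by
  intro a
  exact ⟨frT s g a, (frT_spec s g a).1, rfl, (frT_spec s g a).2, fun j h0 hj => frT_min s g a h0 hj⟩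

/-- Side preservation. -/
lemma IsFR.side {s : α → Prop} {g g₀ : Equiv.Perm α} (h : IsFR s g g₀) (a : α) :
    s a ↔ s (g₀ a) := by
  obtain ⟨k, _, heq, hside, _⟩ := h a
  rw [heq]; exact hside

/-- The meet setoid of the orbit setoid with the side kernel. -/
def meetS (s : α → Prop) (g : Equiv.Perm α) : Setoid α :=
  ⟨fun x y => g.SameCycle x y ∧ (s x ↔ s y), by
    refine ⟨fun x => ⟨Equiv.Perm.SameCycle.refl _ _, Iff.rfl⟩, ?_, ?_⟩
    · rintro x y ⟨h1, h2⟩; exact ⟨h1.symm, h2.symm⟩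
    · rintro x y z ⟨h1, h2⟩ ⟨h1', h2'⟩; exact ⟨h1.trans h1', h2.trans h2'⟩⟩

/-- FR1: the orbits of a first-return map. -/
lemma IsFR.sameCycle_iff {s : α → Prop} {g g₀ : Equiv.Perm α} (h : IsFR s g g₀) {x y : α} :
    g₀.SameCycle x y ↔ (g.SameCycle x y ∧ (s x ↔ s y)) := by
  constructor
  · intro hxy
    refine keeps_sameCycle (r := meetS s g) ?_ hxy
    intro z
    obtain ⟨k, _, heq, hside, _⟩ := h z
    refine ⟨?_, ?_⟩
    · rw [heq]; exact ⟨(k : ℤ), by rw [zpow_natCast]⟩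
    · rw [heq]; exact hside
  · rintro ⟨hxy, hside⟩
    have main : ∀ i : ℕ, ∀ x : α, (s x ↔ s ((g ^ i) x)) → g₀.SameCycle x ((g ^ i) x) := by
      intro i
      induction i using Nat.strong_induction_on with
      | _ i ih =>
        intro x hside
        rcases Nat.eq_zero_or_pos i with rfl | hi0
        · simp only [pow_zero, Equiv.Perm.one_apply]
          exact Equiv.Perm.SameCycle.refl _ _
        · obtain ⟨k, hk0, heq, hsk, hmin⟩ := h x
          have hki : k ≤ i := by
            by_contra hcon
            push_neg at hcon
            exact hmin i hi0 hcon hside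
          have hstep : g₀.SameCycle x ((g ^ k) x) := by
            rw [← heq]; exact ⟨1, by simp⟩
          rcases Nat.eq_or_lt_of_le hki with rfl | hki'
          · exact hstep
          · have hrest : (g ^ (i - k)) ((g ^ k) x) = (g ^ i) x := by
              rw [← Equiv.Perm.mul_apply, ← pow_add]
              have hnum : i - k + k = i := by omega
              rw [hnum]
            have hside2 : s ((g ^ k) x) ↔ s ((g ^ (i - k)) ((g ^ k) x)) := by
              rw [hrest]
              exact hsk.symm.trans hside
            have := ih (i - k) (by omega) ((g ^ k) x) hside2
            rw [hrest] at this
            exact hstep.trans this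
    obtain ⟨i, _, rfl⟩ := hxy.exists_pow_eq'
    exact main i x hside

end FR

end AnnNC
namespace AnnNC

open Equiv Equiv.Perm Function

variable {α : Type*}

section KrInterior

variable [Finite α]

/-- If `y` and `Kr y` are on the same side, the Kreweras complements of `g` and of its
first-return map agree at `y`. -/
lemma IsFR.kr_interior {s : α → Prop} {g g₀ τ : Equiv.Perm α} (h : IsFR s g g₀)
    (hτ : ∀ z, s z ↔ s (τ z)) {y : α} (hy : s y ↔ s ((g⁻¹ * τ) y)) :
    (g₀⁻¹ * τ) y = (g⁻¹ * τ) y := by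
  set a := g⁻¹ (τ y) with ha
  have hya : s y ↔ s a := by
    rw [ha]; exact hy
  have hga : g a = τ y := by rw [ha]; simp
  obtain ⟨k, hk0, heq, hside, hmin⟩ := h a
  have hk1 : k = 1 := by
    by_contra hk
    apply hmin 1 one_pos (by omega)
    rw [pow_one, hga]
    exact hya.symm.trans (hτ y)
  have hg₀a : g₀ a = τ y := by
    rw [heq, hk1, pow_one, hga]
  show g₀⁻¹ (τ y) = g⁻¹ (τ y)
  rw [← ha, ← hg₀a]
  simp

end KrInterior

section OrbCount

variable [Finite α]

/-- The set of orbits of `g` meeting `S`. -/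
def orbSet (g : Equiv.Perm α) (S : Set α) : Set (Quotient (orbitSetoid g)) :=
  (Quotient.mk (orbitSetoid g)) '' S

/-- The number of orbits of `g` meeting `S`. -/
noncomputable def nIn (g : Equiv.Perm α) (S : Set α) : ℕ :=
  Nat.card (orbSet g S)

lemma card_eq_of_common_surj {A B C : Type*} [Finite A] (f : A → B) (k : A → C)
    (hf : Function.Surjective f) (hk : Function.Surjective k)
    (h : ∀ a a', f a = f a' ↔ k a = k a') : Nat.card B = Nat.card C := by
  cases isEmpty_or_nonempty A with
  | inl hA =>
    have hB : IsEmpty B := ⟨fun b => by obtain ⟨a, _⟩ := hf b; exact IsEmpty.false a⟩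
    have hC : IsEmpty C := ⟨fun c => by obtain ⟨a, _⟩ := hk c; exact IsEmpty.false a⟩
    rw [Nat.card_of_isEmpty, Nat.card_of_isEmpty]
  | inr hA =>
    have hbij : Function.Bijective (k ∘ Function.surjInv hf) := by
      constructor
      · intro b b' hbb
        have h1 : k (Function.surjInv hf b) = k (Function.surjInv hf b') := hbb
        have h2 := (h _ _).2 h1
        rwa [Function.surjInv_eq hf, Function.surjInv_eq hf] at h2
      · intro c
        obtain ⟨a, rfl⟩ := hk c
        refine ⟨f a, ?_⟩
        have h1 : f (Function.surjInv hf (f a)) = f a := Function.surjInv_eq hf (f a)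
        exact (h _ _).1 h1
    exact Nat.card_eq_of_bijective _ hbij

lemma sameCycle_of_mk_eq {g : Equiv.Perm α} {x y : α}
    (h : Quotient.mk (orbitSetoid g) x = Quotient.mk (orbitSetoid g) y) : g.SameCycle x y :=
  Quotient.exact h

lemma mk_eq_of_sameCycle {g : Equiv.Perm α} {x y : α} (h : g.SameCycle x y) :
    Quotient.mk (orbitSetoid g) x = Quotient.mk (orbitSetoid g) y :=
  Quotient.sound h

/-- Orbits of invariant disjoint sets are disjoint. -/
lemma orbSet_disjoint {g : Equiv.Perm α} {B C : Set α} (hB : Set.MapsTo (⇑g) B B)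
    (hD : Disjoint B C) : Disjoint (orbSet g B) (orbSet g C) := by
  rw [Set.disjoint_left]
  rintro c ⟨x, hx, rfl⟩ ⟨y, hy, hyeq⟩
  have hsc : g.SameCycle y x := sameCycle_of_mk_eq hyeq
  have : x ∈ B := hx
  have hyB : y ∈ B := sameCycle_mem_of_mapsTo hB hsc.symm hx
  exact Set.disjoint_left.1 hD hyB hy

lemma nIn_union {g : Equiv.Perm α} {B C : Set α} (hB : Set.MapsTo (⇑g) B B)
    (hD : Disjoint B C) : nIn g (B ∪ C) = nIn g B + nIn g C := by
  unfold nIn orbSet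
  rw [Set.image_union]
  rw [Nat.card_coe_set_eq, Nat.card_coe_set_eq, Nat.card_coe_set_eq]
  exact Set.ncard_union_eq (orbSet_disjoint hB hD) (Set.toFinite _) (Set.toFinite _)

lemma numOrbits_eq_nIn_univ (g : Equiv.Perm α) : numOrbits g = nIn g Set.univ := by
  unfold numOrbits nIn orbSet
  rw [Set.image_univ, Set.range_eq_univ.2 (fun c => Quotient.exists_rep c)]
  exact (Nat.card_congr (Equiv.Set.univ _)).symm

lemma numOrbits_split (g : Equiv.Perm α) (S : Set α) (hS : Set.MapsTo (⇑g) S S) :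
    numOrbits g = nIn g S + nIn g Sᶜ := by
  rw [numOrbits_eq_nIn_univ, ← Set.union_compl_self S]
  exact nIn_union hS disjoint_compl_right

lemma nIn_pos {g : Equiv.Perm α} {S : Set α} (hS : S.Nonempty) : 1 ≤ nIn g S := by
  have h1 : (orbSet g S).Nonempty := hS.image _
  have h2 : Nonempty (orbSet g S) := h1.to_subtype
  exact Nat.one_le_iff_ne_zero.2 (Nat.card_ne_zero.2 ⟨h2, inferInstance⟩)

lemma nIn_single {g : Equiv.Perm α} {S : Set α} (h1 : nIn g S = 1) {x y : α} (hx : x ∈ S)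
    (hy : y ∈ S) : g.SameCycle x y := by
  have hsub : Subsingleton (orbSet g S) := by
    have := Nat.card_eq_one_iff_unique.1 h1
    exact this.1
  have h2 : (⟨Quotient.mk (orbitSetoid g) x, ⟨x, hx, rfl⟩⟩ : orbSet g S) =
      ⟨Quotient.mk (orbitSetoid g) y, ⟨y, hy, rfl⟩⟩ := Subsingleton.elim _ _
  exact sameCycle_of_mk_eq (congrArg Subtype.val h2)

/-- Pointwise equal on an invariant set implies the same cycles inside. -/
lemma sameCycle_iff_of_eqOn {g g' : Equiv.Perm α} {S : Set α} (hS : Set.MapsTo (⇑g) S S)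
    (heq : ∀ x ∈ S, g x = g' x) {x y : α} (hx : x ∈ S) :
    g.SameCycle x y ↔ g'.SameCycle x y := by
  have hpow : ∀ i : ℕ, ∀ x ∈ S, (g ^ i) x = (g' ^ i) x ∧ (g ^ i) x ∈ S := by
    intro i
    induction i with
    | zero => intro x hx; simpa using hx
    | succ n ih =>
      intro x hx
      obtain ⟨h1, h2⟩ := ih x hx
      have e1 : (g ^ (n + 1)) x = g ((g ^ n) x) := by rw [pow_succ', Equiv.Perm.mul_apply]
      have e2 : (g' ^ (n + 1)) x = g' ((g' ^ n) x) := by rw [pow_succ', Equiv.Perm.mul_apply]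
      constructor
      · rw [e1, e2]
        exact (heq _ h2).trans (congrArg _ h1)
      · rw [e1]
        exact hS h2
  have hS' : Set.MapsTo (⇑g') S S := by
    intro z hz
    rw [← heq z hz]
    exact hS hz
  have heq' : ∀ x ∈ S, g' x = g x := fun x hx => (heq x hx).symm
  have hpow' : ∀ i : ℕ, ∀ x ∈ S, (g' ^ i) x = (g ^ i) x ∧ (g' ^ i) x ∈ S := by
    intro i
    induction i with
    | zero => intro x hx; simpa using hx
    | succ n ih =>
      intro x hx
      obtain ⟨h1, h2⟩ := ih x hx
      have e1 : (g' ^ (n + 1)) x = g' ((g' ^ n) x) := by rw [pow_succ', Equiv.Perm.mul_apply]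
      have e2 : (g ^ (n + 1)) x = g ((g ^ n) x) := by rw [pow_succ', Equiv.Perm.mul_apply]
      constructor
      · rw [e1, e2]
        exact (heq' _ h2).trans (congrArg _ h1)
      · rw [e1]
        exact hS' h2
  constructor
  · intro h
    obtain ⟨i, _, rfl⟩ := h.exists_pow_eq'
    exact ⟨(i : ℤ), by rw [zpow_natCast, (hpow i x hx).1]⟩
  · intro h
    obtain ⟨i, _, rfl⟩ := h.exists_pow_eq'
    exact ⟨(i : ℤ), by rw [zpow_natCast, (hpow' i x hx).1]⟩

lemma nIn_congr_of_eqOn {g g' : Equiv.Perm α} {S : Set α} (hS : Set.MapsTo (⇑g) S S)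
    (heq : ∀ x ∈ S, g x = g' x) : nIn g S = nIn g' S := by
  unfold nIn
  refine card_eq_of_common_surj (A := S)
    (fun x => (⟨Quotient.mk (orbitSetoid g) x.1, ⟨x.1, x.2, rfl⟩⟩ : orbSet g S))
    (fun x => (⟨Quotient.mk (orbitSetoid g') x.1, ⟨x.1, x.2, rfl⟩⟩ : orbSet g' S))
    ?_ ?_ ?_
  · rintro ⟨c, x, hx, rfl⟩
    exact ⟨⟨x, hx⟩, rfl⟩
  · rintro ⟨c, x, hx, rfl⟩
    exact ⟨⟨x, hx⟩, rfl⟩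
  · rintro ⟨x, hx⟩ ⟨y, hy⟩
    constructor
    · intro hc
      have := sameCycle_of_mk_eq (g := g) (congrArg Subtype.val hc)
      exact Subtype.ext (mk_eq_of_sameCycle ((sameCycle_iff_of_eqOn hS heq hx).1 this))
    · intro hc
      have := sameCycle_of_mk_eq (g := g') (congrArg Subtype.val hc)
      exact Subtype.ext (mk_eq_of_sameCycle ((sameCycle_iff_of_eqOn hS heq hx).2 this))

end OrbCount

end AnnNC
namespace AnnNC

open Equiv Equiv.Perm Function

section Tau

variable {p q : ℕ}

/-- The side predicate. -/
def sideP (p q : ℕ) (x : Fin (p + q)) : Prop := (x : ℕ) < p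

/-- The side setoid. -/
def sideS (p q : ℕ) : Setoid (Fin (p + q)) :=
  ⟨fun x y => ((x : ℕ) < p ↔ (y : ℕ) < p), by
    refine ⟨fun x => Iff.rfl, ?_, ?_⟩
    · exact fun h => h.symm
    · exact fun h h' => h.trans h'⟩

lemma tau_castAdd (i : Fin p) :
    tauPQ p q (Fin.castAdd q i) = Fin.castAdd q (finRotate p i) := by
  unfold tauPQ
  rw [Equiv.permCongr_apply, finSumFinEquiv_symm_apply_castAdd]
  simp [finSumFinEquiv_apply_left]

lemma tau_natAdd (j : Fin q) :
    tauPQ p q (Fin.natAdd p j) = Fin.natAdd p (finRotate q j) := by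
  unfold tauPQ
  rw [Equiv.permCongr_apply, finSumFinEquiv_symm_apply_natAdd]
  simp [finSumFinEquiv_apply_right]

lemma side_tau (x : Fin (p + q)) : (x : ℕ) < p ↔ ((tauPQ p q x : ℕ) < p) := by
  induction x using Fin.addCases with
  | left i =>
    rw [tau_castAdd]
    simp only [Fin.coe_castAdd]
    exact iff_of_true i.isLt (finRotate p i).isLt
  | right j =>
    rw [tau_natAdd]
    simp only [Fin.coe_natAdd]
    omega

lemma tau_pow_castAdd (k : ℕ) (i : Fin p) :
    ((tauPQ p q) ^ k) (Fin.castAdd q i) = Fin.castAdd q ((finRotate p ^ k) i) := by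
  induction k with
  | zero => simp
  | succ n ih =>
    have e1 : ((tauPQ p q) ^ (n + 1)) (Fin.castAdd q i) =
        tauPQ p q (((tauPQ p q) ^ n) (Fin.castAdd q i)) := by
      rw [pow_succ', Equiv.Perm.mul_apply]
    have e2 : (finRotate p ^ (n + 1)) i = finRotate p ((finRotate p ^ n) i) := by
      rw [pow_succ', Equiv.Perm.mul_apply]
    rw [e1, ih, e2, tau_castAdd]

lemma tau_pow_natAdd (k : ℕ) (j : Fin q) :
    ((tauPQ p q) ^ k) (Fin.natAdd p j) = Fin.natAdd p ((finRotate q ^ k) j) := by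
  induction k with
  | zero => simp
  | succ n ih =>
    have e1 : ((tauPQ p q) ^ (n + 1)) (Fin.natAdd p j) =
        tauPQ p q (((tauPQ p q) ^ n) (Fin.natAdd p j)) := by
      rw [pow_succ', Equiv.Perm.mul_apply]
    have e2 : (finRotate q ^ (n + 1)) j = finRotate q ((finRotate q ^ n) j) := by
      rw [pow_succ', Equiv.Perm.mul_apply]
    rw [e1, ih, e2, tau_natAdd]

lemma finRotate_sameCycle : ∀ {m : ℕ} (i j : Fin m), (finRotate m).SameCycle i j := by
  intro m
  match m with
  | 0 => exact fun i => i.elim0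
  | 1 => intro i j; rw [Subsingleton.elim i j]
  | (n + 2) =>
    intro i j
    apply isCycle_finRotate.sameCycle
    · have : i ∈ (finRotate (n + 2)).support := by
        rw [support_finRotate]; exact Finset.mem_univ i
      exact Equiv.Perm.mem_support.1 this
    · have : j ∈ (finRotate (n + 2)).support := by
        rw [support_finRotate]; exact Finset.mem_univ j
      exact Equiv.Perm.mem_support.1 this

lemma sameCycle_tau_iff (x y : Fin (p + q)) :
    (tauPQ p q).SameCycle x y ↔ ((x : ℕ) < p ↔ (y : ℕ) < p) := by
  constructor
  · intro h
    exact keeps_sameCycle (r := sideS p q) (fun z => side_tau z) h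
  · intro hside
    induction x using Fin.addCases with
    | left i =>
      induction y using Fin.addCases with
      | left i' =>
        obtain ⟨k, _, hk⟩ := (finRotate_sameCycle i i').exists_pow_eq'
        exact ⟨(k : ℤ), by rw [zpow_natCast, tau_pow_castAdd, hk]⟩
      | right j' =>
        exfalso
        simp only [Fin.coe_castAdd, Fin.coe_natAdd] at hside
        have := hside.1 i.isLt
        omega
    | right j =>
      induction y using Fin.addCases with
      | left i' =>
        exfalso
        simp only [Fin.coe_castAdd, Fin.coe_natAdd] at hside
        have := hside.2 i'.isLt
        omega
      | right j' =>
        obtain ⟨k, _, hk⟩ := (finRotate_sameCycle j j').exists_pow_eq'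
        exact ⟨(k : ℤ), by rw [zpow_natCast, tau_pow_natAdd, hk]⟩

lemma orbitSetoid_tau : orbitSetoid (tauPQ p q) = sideS p q :=
  Setoid.ext fun x y => sameCycle_tau_iff x y

/-- `Nat.card` of the quotient by the side setoid is 2. -/
lemma card_quot_sideS (hp : 1 ≤ p) (hq : 1 ≤ q) :
    Nat.card (Quotient (sideS p q)) = 2 := by
  classical
  have h := card_eq_of_common_surj (A := Fin (p + q))
    (Quotient.mk (sideS p q)) (fun x => decide ((x : ℕ) < p))
    (fun c => Quotient.exists_rep c) ?_ ?_
  · rw [h, Nat.card_eq_fintype_card, Fintype.card_bool]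
  · intro b
    cases b with
    | true => exact ⟨⟨0, by omega⟩, by simp; omega⟩
    | false => exact ⟨⟨p, by omega⟩, by simp⟩
  · intro a a'
    constructor
    · intro h1
      have h2 : (sideS p q) a a' := Quotient.exact h1
      exact decide_eq_decide.2 h2
    · intro h1
      exact Quotient.sound (decide_eq_decide.1 h1)

lemma numOrbits_tau (hp : 1 ≤ p) (hq : 1 ≤ q) : numOrbits (tauPQ p q) = 2 := by
  unfold numOrbits
  rw [orbitSetoid_tau]
  exact card_quot_sideS hp hq

/-- The join of a side-preserving permutation with τ is the side setoid. -/
lemma join_eq_sideS {g : Equiv.Perm (Fin (p + q))}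
    (hg : ∀ z : Fin (p + q), ((z : ℕ) < p ↔ ((g z : ℕ) < p))) :
    orbitSetoid g ⊔ orbitSetoid (tauPQ p q) = sideS p q := by
  apply le_antisymm
  · apply sup_le
    · intro x y h
      exact keeps_sameCycle (r := sideS p q) hg h
    · intro x y h
      exact (sameCycle_tau_iff x y).1 h
  · intro x y h
    exact le_sup_right (α := Setoid (Fin (p + q))) ((sameCycle_tau_iff x y).2 h)

lemma numJoin_side (hp : 1 ≤ p) (hq : 1 ≤ q) {g : Equiv.Perm (Fin (p + q))}
    (hg : ∀ z : Fin (p + q), ((z : ℕ) < p ↔ ((g z : ℕ) < p))) : numJoin g (tauPQ p q) = 2 := by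
  unfold numJoin
  rw [join_eq_sideS hg]
  exact card_quot_sideS hp hq

/-- If `g` has a bridge, the join of `g` with τ is everything. -/
lemma numJoin_bridge {g : Equiv.Perm (Fin (p + q))} (hp : 1 ≤ p) (hq : 1 ≤ q)
    {a b : Fin (p + q)} (hab : g.SameCycle a b) (ha : (a : ℕ) < p) (hb : p ≤ (b : ℕ)) :
    numJoin g (tauPQ p q) = 1 := by
  set J := orbitSetoid g ⊔ orbitSetoid (tauPQ p q) with hJ
  have hτle : orbitSetoid (tauPQ p q) ≤ J := le_sup_right
  have hgle : orbitSetoid g ≤ J := le_sup_left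
  have hall : ∀ x : Fin (p + q), J x a := by
    intro x
    by_cases hx : (x : ℕ) < p
    · exact hτle ((sameCycle_tau_iff x a).2 (iff_of_true hx ha))
    · have h1 : J x b := hτle ((sameCycle_tau_iff x b).2 (iff_of_false hx (by omega)))
      exact Setoid.trans' _ h1 (Setoid.symm' _ (hgle hab))
  have hsub : Subsingleton (Quotient J) := by
    constructor
    intro c d
    obtain ⟨x, rfl⟩ := Quotient.exists_rep c
    obtain ⟨y, rfl⟩ := Quotient.exists_rep d
    exact Quotient.sound (Setoid.trans' _ (hall x) (Setoid.symm' _ (hall y)))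
  have hne : Nonempty (Quotient J) := ⟨Quotient.mk J ⟨0, by omega⟩⟩
  unfold numJoin
  exact Nat.card_eq_one_iff_unique.2 ⟨hsub, hne⟩

/-- Unpacking the noncrossing hypothesis for a permutation with a bridge. -/
lemma sum_orbits_eq (hp : 1 ≤ p) (hq : 1 ≤ q) {g : Equiv.Perm (Fin (p + q))}
    (hnc : IsNoncrossingOn g (tauPQ p q))
    {a b : Fin (p + q)} (hab : g.SameCycle a b) (ha : (a : ℕ) < p) (hb : p ≤ (b : ℕ)) :
    numOrbits g + numOrbits (g⁻¹ * tauPQ p q) = p + q := by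
  have h1 := hnc
  unfold IsNoncrossingOn euler at h1
  rw [numJoin_bridge hp hq hab ha hb, numOrbits_tau hp hq] at h1
  have hcard : Nat.card (Fin (p + q)) = p + q := by
    rw [Nat.card_eq_fintype_card, Fintype.card_fin]
  rw [hcard] at h1
  have := h1
  omega

end Tau

end AnnNC
namespace AnnNC

open Equiv Equiv.Perm Function

section BridgeBasic

variable {p q : ℕ}

lemma sameCycle_mem_bridgeSet {g : Equiv.Perm (Fin (p + q))} {x y : Fin (p + q)}
    (hx : x ∈ BridgeSet p q g) (hxy : g.SameCycle x y) : y ∈ BridgeSet p q g := by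
  obtain ⟨a, b, h1, h2, h3, h4⟩ := hx
  exact ⟨a, b, hxy.symm.trans h1, hxy.symm.trans h2, h3, h4⟩

lemma bridgeSet_mapsTo (g : Equiv.Perm (Fin (p + q))) :
    Set.MapsTo (⇑g) (BridgeSet p q g) (BridgeSet p q g) := fun x hx =>
  sameCycle_mem_bridgeSet hx ⟨1, by simp⟩

lemma mapsTo_compl_of_mapsTo {α : Type*} [Finite α] {g : Equiv.Perm α} {S : Set α}
    (h : Set.MapsTo (⇑g) S S) : Set.MapsTo (⇑g) Sᶜ Sᶜ := by
  intro z hz hcon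
  have h1 : g.SameCycle (g z) z := ⟨-1, by simp⟩
  exact hz (sameCycle_mem_of_mapsTo h h1 hcon)

lemma side_of_not_bridge {g : Equiv.Perm (Fin (p + q))} {y : Fin (p + q)}
    (hy : y ∉ BridgeSet p q g) : ((y : ℕ) < p ↔ ((g y : ℕ) < p)) := by
  by_contra hcon
  rw [iff_iff_implies_and_implies, not_and_or] at hcon
  rcases hcon with h | h
  · push_neg at h
    exact hy ⟨y, g y, SameCycle.refl g y, ⟨1, by simp⟩, h.1, by omega⟩
  · push_neg at h
    exact hy ⟨g y, y, ⟨1, by simp⟩, SameCycle.refl g y, h.1, by omega⟩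

/-- The first-return map agrees with `g` where `g` does not change sides. -/
lemma IsFR.apply_eq {α : Type*} [Finite α] {s : α → Prop} {g g₀ : Equiv.Perm α}
    (hFR : IsFR s g g₀) {a : α} (h : s a ↔ s (g a)) : g₀ a = g a := by
  obtain ⟨k, hk0, heq, hside, hmin⟩ := hFR a
  have hk1 : k = 1 := by
    by_contra hk
    exact hmin 1 one_pos (by omega) (by rw [pow_one]; exact h)
  rw [heq, hk1, pow_one]

/-- If `g` has a bridge then the bridge set of `g⁻¹τ` meets both sides. -/
lemma krBridge_nonempty (hp : 1 ≤ p) (hq : 1 ≤ q) {g : Equiv.Perm (Fin (p + q))}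
    (hbridge : ∃ a b : Fin (p + q), g.SameCycle a b ∧ (a : ℕ) < p ∧ p ≤ (b : ℕ)) :
    (∃ u ∈ BridgeSet p q (g⁻¹ * tauPQ p q), (u : ℕ) < p) ∧
    (∃ v ∈ BridgeSet p q (g⁻¹ * tauPQ p q), p ≤ (v : ℕ)) := by
  set σ := g⁻¹ * tauPQ p q with hσ
  obtain ⟨a, b, hab, ha, hb⟩ := hbridge
  have hcross : ∃ y : Fin (p + q), ¬ ((y : ℕ) < p ↔ ((σ y : ℕ) < p)) := by
    by_contra hcon
    push_neg at hcon
    have hσk : σ ∈ keepSubgroup (sideS p q) := fun z => hcon z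
    have hτk : tauPQ p q ∈ keepSubgroup (sideS p q) := fun z => side_tau z
    have hgk : g ∈ keepSubgroup (sideS p q) := by
      have hg : g = tauPQ p q * σ⁻¹ := by rw [hσ]; group
      rw [hg]
      exact Subgroup.mul_mem _ hτk (Subgroup.inv_mem _ hσk)
    have := keeps_sameCycle (r := sideS p q) (fun z => hgk z) hab
    have h2 := this.1 ha
    omega
  obtain ⟨y, hy⟩ := hcross
  rw [iff_iff_implies_and_implies, not_and_or] at hy
  rcases hy with h | h
  · push_neg at h
    have hyB : y ∈ BridgeSet p q σ := ⟨y, σ y, SameCycle.refl σ y, ⟨1, by simp⟩, h.1, by omega⟩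
    have hσyB : σ y ∈ BridgeSet p q σ := sameCycle_mem_bridgeSet hyB ⟨1, by simp⟩
    exact ⟨⟨y, hyB, h.1⟩, ⟨σ y, hσyB, by omega⟩⟩
  · push_neg at h
    have hyB : y ∈ BridgeSet p q σ := ⟨σ y, y, ⟨1, by simp⟩, SameCycle.refl σ y, h.1, by omega⟩
    have hσyB : σ y ∈ BridgeSet p q σ := sameCycle_mem_bridgeSet hyB ⟨1, by simp⟩
    exact ⟨⟨σ y, hσyB, h.1⟩, ⟨y, hyB, by omega⟩⟩

/-- Doubling: each bridge orbit of `g` splits into two orbits of the first-return map. -/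
lemma nIn_double {g g₀ : Equiv.Perm (Fin (p + q))} (hFR : IsFR (sideP p q) g g₀) :
    nIn g₀ (BridgeSet p q g) = 2 * nIn g (BridgeSet p q g) := by
  classical
  unfold nIn
  have h := card_eq_of_common_surj (A := (BridgeSet p q g : Set (Fin (p + q))))
    (fun x => (⟨Quotient.mk (orbitSetoid g₀) x.1, ⟨x.1, x.2, rfl⟩⟩ : orbSet g₀ (BridgeSet p q g)))
    (fun x => ((⟨Quotient.mk (orbitSetoid g) x.1, ⟨x.1, x.2, rfl⟩⟩ : orbSet g (BridgeSet p q g)),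
      decide ((x.1 : ℕ) < p)))
    ?_ ?_ ?_
  · rw [h, Nat.card_prod, Nat.card_eq_fintype_card (α := Bool), Fintype.card_bool, mul_comm]
  · rintro ⟨c, x, hx, rfl⟩
    exact ⟨⟨x, hx⟩, rfl⟩
  · rintro ⟨⟨c, y, hy, rfl⟩, bb⟩
    obtain ⟨a, b, h1, h2, h3, h4⟩ := hy
    have haB : a ∈ BridgeSet p q g :=
      ⟨a, b, SameCycle.refl g a, h1.symm.trans h2, h3, h4⟩
    have hbB : b ∈ BridgeSet p q g :=
      ⟨a, b, h2.symm.trans h1, SameCycle.refl g b, h3, h4⟩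
    cases bb with
    | true =>
      refine ⟨⟨a, haB⟩, ?_⟩
      refine Prod.ext (Subtype.ext (Quotient.sound h1.symm)) ?_
      simp [h3]
    | false =>
      refine ⟨⟨b, hbB⟩, ?_⟩
      refine Prod.ext (Subtype.ext (Quotient.sound h2.symm)) ?_
      simp
      omega
  · rintro ⟨x, hx⟩ ⟨x', hx'⟩
    constructor
    · intro hc
      have h1 := sameCycle_of_mk_eq (g := g₀) (congrArg Subtype.val hc)
      have h2 := (hFR.sameCycle_iff).1 h1
      refine Prod.ext (Subtype.ext (mk_eq_of_sameCycle h2.1)) ?_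
      simp only [decide_eq_decide]
      exact h2.2
    · intro hc
      have h1 : Quotient.mk (orbitSetoid g) x = Quotient.mk (orbitSetoid g) x' :=
        congrArg (fun z => (Prod.fst z).val) hc
      have h2 : decide ((x : ℕ) < p) = decide ((x' : ℕ) < p) :=
        congrArg Prod.snd hc
    
      have h3 : (sideP p q x ↔ sideP p q x') := decide_eq_decide.1 h2
      exact Subtype.ext (mk_eq_of_sameCycle ((hFR.sameCycle_iff).2
        ⟨sameCycle_of_mk_eq h1, h3⟩))

end BridgeBasic

end AnnNC
namespace AnnNC

open Equiv Equiv.Perm Function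

section Conj

variable {p q : ℕ}

lemma side_inv {h : Equiv.Perm (Fin (p + q))}
    (hside : ∀ z : Fin (p + q), ((z : ℕ) < p ↔ ((h z : ℕ) < p))) (z : Fin (p + q)) :
    ((z : ℕ) < p ↔ ((h⁻¹ z : ℕ) < p)) := by
  have := hside (h⁻¹ z)
  rw [Equiv.Perm.apply_inv_self] at this
  exact this.symm

lemma bridge_conj_mem {h g : Equiv.Perm (Fin (p + q))}
    (hside : ∀ z : Fin (p + q), ((z : ℕ) < p ↔ ((h z : ℕ) < p))) (x : Fin (p + q)) :
    x ∈ BridgeSet p q (h * g * h⁻¹) ↔ h⁻¹ x ∈ BridgeSet p q g := by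
  constructor
  · rintro ⟨a, b, h1, h2, h3, h4⟩
    refine ⟨h⁻¹ a, h⁻¹ b, Equiv.Perm.sameCycle_conj.1 h1, Equiv.Perm.sameCycle_conj.1 h2, ?_, ?_⟩
    · exact (side_inv hside a).1 h3
    · have := side_inv hside b
      omega
  · rintro ⟨a, b, h1, h2, h3, h4⟩
    refine ⟨h a, h b, ?_, ?_, ?_, ?_⟩
    · apply Equiv.Perm.sameCycle_conj.2
      rwa [Equiv.Perm.inv_apply_self]
    · apply Equiv.Perm.sameCycle_conj.2
      rwa [Equiv.Perm.inv_apply_self]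
    · exact (hside a).1 h3
    · have := hside b
      omega

lemma numOrbits_conj {h g : Equiv.Perm (Fin (p + q))} :
    numOrbits (h * g * h⁻¹) = numOrbits g := by
  unfold numOrbits
  refine card_eq_of_common_surj (A := Fin (p + q))
    (Quotient.mk (orbitSetoid (h * g * h⁻¹)))
    (fun x => Quotient.mk (orbitSetoid g) (h⁻¹ x))
    (fun c => Quotient.exists_rep c) ?_ ?_
  · intro c
    obtain ⟨y, rfl⟩ := Quotient.exists_rep c
    exact ⟨h y, by simp⟩
  · intro a a'
    constructor
    · intro hc
      exact mk_eq_of_sameCycle (Equiv.Perm.sameCycle_conj.1 (sameCycle_of_mk_eq hc))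
    · intro hc
      exact mk_eq_of_sameCycle (Equiv.Perm.sameCycle_conj.2 (sameCycle_of_mk_eq hc))

lemma nIn_bridge_conj {h g : Equiv.Perm (Fin (p + q))}
    (hside : ∀ z : Fin (p + q), ((z : ℕ) < p ↔ ((h z : ℕ) < p))) :
    nIn (h * g * h⁻¹) (BridgeSet p q (h * g * h⁻¹)) = nIn g (BridgeSet p q g) := by
  unfold nIn
  refine card_eq_of_common_surj (A := (BridgeSet p q (h * g * h⁻¹) : Set (Fin (p + q))))
    (fun x => (⟨Quotient.mk (orbitSetoid (h * g * h⁻¹)) x.1, ⟨x.1, x.2, rfl⟩⟩ :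
      orbSet (h * g * h⁻¹) (BridgeSet p q (h * g * h⁻¹))))
    (fun x => (⟨Quotient.mk (orbitSetoid g) (h⁻¹ x.1),
      ⟨h⁻¹ x.1, (bridge_conj_mem hside x.1).1 x.2, rfl⟩⟩ : orbSet g (BridgeSet p q g)))
    ?_ ?_ ?_
  · rintro ⟨c, x, hx, rfl⟩
    exact ⟨⟨x, hx⟩, rfl⟩
  · rintro ⟨c, y, hy, rfl⟩
    have hmem : h y ∈ BridgeSet p q (h * g * h⁻¹) := by
      rw [bridge_conj_mem hside, Equiv.Perm.inv_apply_self]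
      exact hy
    refine ⟨⟨h y, hmem⟩, Subtype.ext ?_⟩
    simp
  · rintro ⟨x, hx⟩ ⟨x', hx'⟩
    constructor
    · intro hc
      exact Subtype.ext (mk_eq_of_sameCycle (Equiv.Perm.sameCycle_conj.1
        (sameCycle_of_mk_eq (congrArg Subtype.val hc))))
    · intro hc
      exact Subtype.ext (mk_eq_of_sameCycle (Equiv.Perm.sameCycle_conj.2
        (sameCycle_of_mk_eq (congrArg Subtype.val hc))))

end Conj

section Sigma0

variable {p q : ℕ} {g g₀ : Equiv.Perm (Fin (p + q))}

lemma sigma0_side (hFR : IsFR (sideP p q) g g₀) (z : Fin (p + q)) :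
    ((z : ℕ) < p ↔ (((g₀⁻¹ * tauPQ p q) z : ℕ) < p)) := by
  show _ ↔ ((g₀⁻¹ (tauPQ p q z) : ℕ) < p)
  have h1 := side_tau (p := p) (q := q) z
  have h2 : ((g₀⁻¹ (tauPQ p q z) : ℕ) < p) ↔ ((g₀ (g₀⁻¹ (tauPQ p q z)) : ℕ) < p) :=
    hFR.side (g₀⁻¹ (tauPQ p q z))
  rw [Equiv.Perm.apply_inv_self] at h2
  exact h1.trans h2.symm

lemma sigma0_eq_on_nb (hFR : IsFR (sideP p q) g g₀) {x : Fin (p + q)}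
    (hx : x ∈ (BridgeSet p q (g⁻¹ * tauPQ p q))ᶜ) :
    (g⁻¹ * tauPQ p q) x = (g₀⁻¹ * tauPQ p q) x :=
  (hFR.kr_interior (fun z => side_tau z) (side_of_not_bridge hx)).symm

lemma sigma0_mapsTo_nb (hFR : IsFR (sideP p q) g g₀) :
    Set.MapsTo (⇑(g₀⁻¹ * tauPQ p q)) (BridgeSet p q (g⁻¹ * tauPQ p q))ᶜ
      (BridgeSet p q (g⁻¹ * tauPQ p q))ᶜ := by
  intro x hx
  rw [← sigma0_eq_on_nb hFR hx]
  exact mapsTo_compl_of_mapsTo (bridgeSet_mapsTo _) hx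

lemma sigma0_mapsTo_bs (hFR : IsFR (sideP p q) g g₀) :
    Set.MapsTo (⇑(g₀⁻¹ * tauPQ p q)) (BridgeSet p q (g⁻¹ * tauPQ p q))
      (BridgeSet p q (g⁻¹ * tauPQ p q)) := by
  have := mapsTo_compl_of_mapsTo (sigma0_mapsTo_nb hFR)
  rwa [compl_compl] at this

lemma sigma0_mapsTo_b1 (hFR : IsFR (sideP p q) g g₀) :
    Set.MapsTo (⇑(g₀⁻¹ * tauPQ p q))
      (BridgeSet p q (g⁻¹ * tauPQ p q) ∩ {x | (x : ℕ) < p})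
      (BridgeSet p q (g⁻¹ * tauPQ p q) ∩ {x | (x : ℕ) < p}) := by
  rintro x ⟨hx1, hx2⟩
  refine ⟨sigma0_mapsTo_bs hFR hx1, ?_⟩
  have := sigma0_side hFR x
  simp only [Set.mem_setOf_eq] at hx2 ⊢
  tauto

lemma sigma0_mapsTo_b2 (hFR : IsFR (sideP p q) g g₀) :
    Set.MapsTo (⇑(g₀⁻¹ * tauPQ p q))
      (BridgeSet p q (g⁻¹ * tauPQ p q) ∩ {x | (x : ℕ) < p}ᶜ)
      (BridgeSet p q (g⁻¹ * tauPQ p q) ∩ {x | (x : ℕ) < p}ᶜ) := by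
  rintro x ⟨hx1, hx2⟩
  refine ⟨sigma0_mapsTo_bs hFR hx1, ?_⟩
  have := sigma0_side hFR x
  simp only [Set.mem_compl_iff, Set.mem_setOf_eq] at hx2 ⊢
  tauto

/-- The main counting inequality for one instance. -/
lemma instance_ineq (hp : 1 ≤ p) (hq : 1 ≤ q) (hFR : IsFR (sideP p q) g g₀)
    (hsum : numOrbits g + numOrbits (g⁻¹ * tauPQ p q) = p + q) :
    nIn g (BridgeSet p q g)
      + nIn (g₀⁻¹ * tauPQ p q) (BridgeSet p q (g⁻¹ * tauPQ p q) ∩ {x | (x : ℕ) < p})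
      + nIn (g₀⁻¹ * tauPQ p q) (BridgeSet p q (g⁻¹ * tauPQ p q) ∩ {x | (x : ℕ) < p}ᶜ)
    ≤ 2 + nIn (g⁻¹ * tauPQ p q) (BridgeSet p q (g⁻¹ * tauPQ p q)) := by
  classical
  have hg₀side : ∀ z : Fin (p + q), ((z : ℕ) < p ↔ ((g₀ z : ℕ) < p)) := fun z => hFR.side z
  -- genus inequality for (g₀, τ)
  have hgen := genus_le (tauPQ p q) (g₀.support.card) g₀ le_rfl
  rw [numJoin_side hp hq hg₀side, numOrbits_tau hp hq] at hgen
  have hcard : Nat.card (Fin (p + q)) = p + q := by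
    rw [Nat.card_eq_fintype_card, Fintype.card_fin]
  rw [hcard] at hgen
  -- counts for g and g₀
  have hm1 : Set.MapsTo (⇑g) (BridgeSet p q g) (BridgeSet p q g) := bridgeSet_mapsTo g
  have hm1c := mapsTo_compl_of_mapsTo hm1
  have hm2 : Set.MapsTo (⇑g₀) (BridgeSet p q g) (BridgeSet p q g) := by
    intro x hx
    have h1 : g₀.SameCycle x (g₀ x) := ⟨1, by simp⟩
    exact sameCycle_mem_bridgeSet hx (hFR.sameCycle_iff.1 h1).1
  have hsplit_g := numOrbits_split g (BridgeSet p q g) hm1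
  have hsplit_g₀ := numOrbits_split g₀ (BridgeSet p q g) hm2
  have hNB : nIn g (BridgeSet p q g)ᶜ = nIn g₀ (BridgeSet p q g)ᶜ := by
    apply nIn_congr_of_eqOn hm1c
    intro x hx
    exact (hFR.apply_eq (side_of_not_bridge hx)).symm
  have hdouble : nIn g₀ (BridgeSet p q g) = 2 * nIn g (BridgeSet p q g) := nIn_double hFR
  -- counts for σ and σ₀
  have hmsc := mapsTo_compl_of_mapsTo (bridgeSet_mapsTo (g⁻¹ * tauPQ p q))
  have hsplit_σ := numOrbits_split (g⁻¹ * tauPQ p q) (BridgeSet p q (g⁻¹ * tauPQ p q))ᶜ hmsc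
  have hsplit_σ₀ := numOrbits_split (g₀⁻¹ * tauPQ p q) (BridgeSet p q (g⁻¹ * tauPQ p q))ᶜ
    (sigma0_mapsTo_nb hFR)
  rw [compl_compl] at hsplit_σ hsplit_σ₀
  have hNBσ : nIn (g⁻¹ * tauPQ p q) (BridgeSet p q (g⁻¹ * tauPQ p q))ᶜ =
      nIn (g₀⁻¹ * tauPQ p q) (BridgeSet p q (g⁻¹ * tauPQ p q))ᶜ :=
    nIn_congr_of_eqOn hmsc (fun x hx => sigma0_eq_on_nb hFR hx)
  have hdisj : Disjoint (BridgeSet p q (g⁻¹ * tauPQ p q) ∩ {x : Fin (p + q) | (x : ℕ) < p})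
      (BridgeSet p q (g⁻¹ * tauPQ p q) ∩ {x : Fin (p + q) | (x : ℕ) < p}ᶜ) :=
    disjoint_compl_right.mono Set.inter_subset_right Set.inter_subset_right
  have hsum2 := nIn_union (g := g₀⁻¹ * tauPQ p q) (sigma0_mapsTo_b1 hFR) hdisj
  rw [Set.inter_union_compl] at hsum2
  omega

end Sigma0

end AnnNC



open AnnNC in
/-- the elements lying in bridges of `Kr(π) = π⁻¹τ` (resp. `Kr⁻¹(π) = τπ⁻¹`)
form exactly two orbits of `Kr(π₀)` (resp. `Kr⁻¹(π₀)`), one contained in `[p]` and one in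
`[p+1,p+q]` (the outside faces); moreover every `a` with `π⁻¹(a)` on the opposite side of
the annulus lies in the set of elements of bridges of `Kr⁻¹(π)`. -/
theorem stmt2 (p q : ℕ) (hp : 1 ≤ p) (hq : 1 ≤ q) (π : Equiv.Perm (Fin (p + q)))
    (hπ : π ∈ SAnnNC p q) (π₀ : Equiv.Perm (Fin (p + q))) (hπ₀ : IsPiZero p q π π₀) :
    (∃ u v : Fin (p + q), (u : ℕ) < p ∧ p ≤ (v : ℕ) ∧
        (∀ x, (π₀⁻¹ * tauPQ p q).SameCycle u x → (x : ℕ) < p) ∧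
        (∀ x, (π₀⁻¹ * tauPQ p q).SameCycle v x → p ≤ (x : ℕ)) ∧
        BridgeSet p q (π⁻¹ * tauPQ p q) =
          {x | (π₀⁻¹ * tauPQ p q).SameCycle u x} ∪ {x | (π₀⁻¹ * tauPQ p q).SameCycle v x}) ∧
    (∃ u v : Fin (p + q), (u : ℕ) < p ∧ p ≤ (v : ℕ) ∧
        (∀ x, (tauPQ p q * π₀⁻¹).SameCycle u x → (x : ℕ) < p) ∧
        (∀ x, (tauPQ p q * π₀⁻¹).SameCycle v x → p ≤ (x : ℕ)) ∧
        BridgeSet p q (tauPQ p q * π⁻¹) =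
          {x | (tauPQ p q * π₀⁻¹).SameCycle u x} ∪ {x | (tauPQ p q * π₀⁻¹).SameCycle v x}) ∧
    (∀ a : Fin (p + q),
        (((a : ℕ) < p ∧ p ≤ ((π⁻¹ a : ℕ))) ∨ (p ≤ (a : ℕ) ∧ ((π⁻¹ a : ℕ)) < p)) →
        a ∈ BridgeSet p q (tauPQ p q * π⁻¹)) := by

  classical
  obtain ⟨hnc, a0, b0, hab0, ha0, hb0⟩ := hπ
  have hFRπ : IsFR (sideP p q) π π₀ := hπ₀
  have hsumπ : numOrbits π + numOrbits (π⁻¹ * tauPQ p q) = p + q :=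
    sum_orbits_eq hp hq hnc hab0 ha0 hb0
  have hI1 := instance_ineq hp hq hFRπ hsumπ
  obtain ⟨⟨u, huB, hus⟩, ⟨v, hvB, hvs⟩⟩ :=
    krBridge_nonempty hp hq (g := π) ⟨a0, b0, hab0, ha0, hb0⟩
  -- instance 2 : apply the same inequality to σ = π⁻¹τ
  have hFRσ := isFR_frPerm (sideP p q) (π⁻¹ * tauPQ p q)
  have hκconj : (π⁻¹ * tauPQ p q)⁻¹ * tauPQ p q =
      (tauPQ p q)⁻¹ * π * ((tauPQ p q)⁻¹)⁻¹ := by group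
  have hκorb : numOrbits ((π⁻¹ * tauPQ p q)⁻¹ * tauPQ p q) = numOrbits π := by
    rw [hκconj]; exact numOrbits_conj
  have hsumσ : numOrbits (π⁻¹ * tauPQ p q) +
      numOrbits ((π⁻¹ * tauPQ p q)⁻¹ * tauPQ p q) = p + q := by
    rw [hκorb]; omega
  have hI2 := instance_ineq hp hq hFRσ hsumσ
  have hτinvside : ∀ z : Fin (p + q), ((z : ℕ) < p ↔ (((tauPQ p q)⁻¹ z : ℕ) < p)) :=
    side_inv (fun z => side_tau z)
  have htrans : nIn ((π⁻¹ * tauPQ p q)⁻¹ * tauPQ p q)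
      (BridgeSet p q ((π⁻¹ * tauPQ p q)⁻¹ * tauPQ p q)) = nIn π (BridgeSet p q π) := by
    rw [hκconj]; exact nIn_bridge_conj hτinvside
  rw [htrans] at hI2
  -- positivity of the four orbit counts
  have hc1pos : 1 ≤ nIn (π₀⁻¹ * tauPQ p q)
      (BridgeSet p q (π⁻¹ * tauPQ p q) ∩ {x | (x : ℕ) < p}) :=
    nIn_pos ⟨u, huB, hus⟩
  have hc2pos : 1 ≤ nIn (π₀⁻¹ * tauPQ p q)
      (BridgeSet p q (π⁻¹ * tauPQ p q) ∩ {x | (x : ℕ) < p}ᶜ) :=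
    nIn_pos ⟨v, hvB, by simp only [Set.mem_compl_iff, Set.mem_setOf_eq]; omega⟩
  obtain ⟨aσ, bσ, hσ1, hσ2, hσ3, hσ4⟩ := id huB
  have hbσ : ∃ a b : Fin (p + q), (π⁻¹ * tauPQ p q).SameCycle a b ∧ (a : ℕ) < p ∧ p ≤ (b : ℕ) :=
    ⟨aσ, bσ, hσ1.symm.trans hσ2, hσ3, hσ4⟩
  obtain ⟨⟨u', hu'B, hu's⟩, ⟨v', hv'B, hv's⟩⟩ := krBridge_nonempty hp hq hbσ
  have hc1'pos : 1 ≤ nIn ((frPerm (sideP p q) (π⁻¹ * tauPQ p q))⁻¹ * tauPQ p q)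
      (BridgeSet p q ((π⁻¹ * tauPQ p q)⁻¹ * tauPQ p q) ∩ {x | (x : ℕ) < p}) :=
    nIn_pos ⟨u', hu'B, hu's⟩
  have hc2'pos : 1 ≤ nIn ((frPerm (sideP p q) (π⁻¹ * tauPQ p q))⁻¹ * tauPQ p q)
      (BridgeSet p q ((π⁻¹ * tauPQ p q)⁻¹ * tauPQ p q) ∩ {x | (x : ℕ) < p}ᶜ) :=
    nIn_pos ⟨v', hv'B, by simp only [Set.mem_compl_iff, Set.mem_setOf_eq]; omega⟩
  have hc1 : nIn (π₀⁻¹ * tauPQ p q)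
      (BridgeSet p q (π⁻¹ * tauPQ p q) ∩ {x | (x : ℕ) < p}) = 1 := by omega
  have hc2 : nIn (π₀⁻¹ * tauPQ p q)
      (BridgeSet p q (π⁻¹ * tauPQ p q) ∩ {x | (x : ℕ) < p}ᶜ) = 1 := by omega
  -- structure of the two outside orbits
  have hm01 := sigma0_mapsTo_b1 hFRπ
  have hm02 := sigma0_mapsTo_b2 hFRπ
  have hBS1 : ∀ x, (π₀⁻¹ * tauPQ p q).SameCycle u x →
      x ∈ BridgeSet p q (π⁻¹ * tauPQ p q) ∧ (x : ℕ) < p := by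
    intro x hx
    have := sameCycle_mem_of_mapsTo hm01 hx ⟨huB, hus⟩
    exact ⟨this.1, this.2⟩
  have hBS2 : ∀ x, (π₀⁻¹ * tauPQ p q).SameCycle v x →
      x ∈ BridgeSet p q (π⁻¹ * tauPQ p q) ∧ p ≤ (x : ℕ) := by
    intro x hx
    have h2 := sameCycle_mem_of_mapsTo hm02 hx
      ⟨hvB, by simp only [Set.mem_compl_iff, Set.mem_setOf_eq]; omega⟩
    refine ⟨h2.1, ?_⟩
    have := h2.2
    simp only [Set.mem_compl_iff, Set.mem_setOf_eq] at this
    omega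
  have horb1 : ∀ x ∈ BridgeSet p q (π⁻¹ * tauPQ p q), (x : ℕ) < p →
      (π₀⁻¹ * tauPQ p q).SameCycle u x := fun x hx hxp =>
    nIn_single hc1 ⟨huB, hus⟩ ⟨hx, hxp⟩
  have horb2 : ∀ x ∈ BridgeSet p q (π⁻¹ * tauPQ p q), p ≤ (x : ℕ) →
      (π₀⁻¹ * tauPQ p q).SameCycle v x := fun x hx hxp =>
    nIn_single hc2 ⟨hvB, by simp only [Set.mem_compl_iff, Set.mem_setOf_eq]; omega⟩
      ⟨hx, by simp only [Set.mem_compl_iff, Set.mem_setOf_eq]; omega⟩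
  have hset1 : BridgeSet p q (π⁻¹ * tauPQ p q) =
      {x | (π₀⁻¹ * tauPQ p q).SameCycle u x} ∪ {x | (π₀⁻¹ * tauPQ p q).SameCycle v x} := by
    ext x
    simp only [Set.mem_union, Set.mem_setOf_eq]
    constructor
    · intro hx
      by_cases hxp : (x : ℕ) < p
      · exact Or.inl (horb1 x hx hxp)
      · exact Or.inr (horb2 x hx (by omega))
    · rintro (hx | hx)
      · exact (hBS1 x hx).1
      · exact (hBS2 x hx).1
  have hconj2 : tauPQ p q * π⁻¹ =
      tauPQ p q * (π⁻¹ * tauPQ p q) * (tauPQ p q)⁻¹ := by group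
  have hconj2₀ : tauPQ p q * π₀⁻¹ =
      tauPQ p q * (π₀⁻¹ * tauPQ p q) * (tauPQ p q)⁻¹ := by group
  refine ⟨⟨u, v, hus, hvs, fun x hx => (hBS1 x hx).2, fun x hx => (hBS2 x hx).2, hset1⟩,
    ⟨tauPQ p q u, tauPQ p q v, (side_tau u).1 hus, ?_, ?_, ?_, ?_⟩, ?_⟩
  · have := side_tau v
    omega
  · intro x hx
    rw [hconj2₀] at hx
    have h1 := Equiv.Perm.sameCycle_conj.1 hx
    rw [Equiv.Perm.inv_apply_self] at h1
    have h2 := (hBS1 _ h1).2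
    have := hτinvside x
    omega
  · intro x hx
    rw [hconj2₀] at hx
    have h1 := Equiv.Perm.sameCycle_conj.1 hx
    rw [Equiv.Perm.inv_apply_self] at h1
    have h2 := (hBS2 _ h1).2
    have := hτinvside x
    omega
  · -- set equality for the Kr⁻¹ version
    ext x
    have hmem : x ∈ BridgeSet p q (tauPQ p q * π⁻¹) ↔
        (tauPQ p q)⁻¹ x ∈ BridgeSet p q (π⁻¹ * tauPQ p q) := by
      rw [hconj2]
      exact bridge_conj_mem (fun z => side_tau z) x
    simp only [Set.mem_union, Set.mem_setOf_eq]
    rw [hmem, hset1]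
    simp only [Set.mem_union, Set.mem_setOf_eq]
    constructor
    · rintro (h1 | h1)
      · left
        rw [hconj2₀]
        apply Equiv.Perm.sameCycle_conj.2
        rwa [Equiv.Perm.inv_apply_self]
      · right
        rw [hconj2₀]
        apply Equiv.Perm.sameCycle_conj.2
        rwa [Equiv.Perm.inv_apply_self]
    · rintro (h1 | h1)
      · left
        rw [hconj2₀] at h1
        have h2 := Equiv.Perm.sameCycle_conj.1 h1
        rwa [Equiv.Perm.inv_apply_self] at h2
      · right
        rw [hconj2₀] at h1
        have h2 := Equiv.Perm.sameCycle_conj.1 h1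
        rwa [Equiv.Perm.inv_apply_self] at h2
  · -- part 3
    intro a ha
    rcases ha with ⟨h1, h2⟩ | ⟨h1, h2⟩
    · refine ⟨a, (tauPQ p q * π⁻¹) a, Equiv.Perm.SameCycle.refl _ _, ⟨1, by simp⟩, h1, ?_⟩
      show p ≤ ((tauPQ p q (π⁻¹ a) : ℕ))
      have := side_tau (π⁻¹ a)
      omega
    · refine ⟨(tauPQ p q * π⁻¹) a, a, ⟨1, by simp⟩, Equiv.Perm.SameCycle.refl _ _, ?_, h1⟩
      show ((tauPQ p q (π⁻¹ a) : ℕ)) < p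
      have := side_tau (π⁻¹ a)
      omega
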